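/- For every positive integer ℓ and every signpost sequence δ, there exists a two-dimensional instance D_{ℓ,δ} = (P, J, φ) with P strictly positive, admitting a fair share F, such that D_{ℓ,δ} has a unique δ-biproportional solution y, and this solution satisfies y_{1f} ≥ F_{1f} + ℓ and y_{1m} ≤ F_{1m} − ℓ. In particular, ‖y − F‖₁ ≥ 2ℓ. -/

import Mathlib

open Finset

/-- A signpost sequence: `γ 0 = 0`, `γ n ∈ [n-1, n]` for `n ≥ 1`, and the
disjunction property. -/
def Signpost (γ : ℕ → ℝ) : Prop :=
  γ 0 = 0 ∧
  (∀ n : ℕ, 1 ≤ n → ((n : ℝ) - 1 ≤ γ n ∧ γ n ≤ n)) ∧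
  ((∃ k : ℕ, 2 ≤ k ∧ γ k = (k : ℝ) - 1) → ∀ l : ℕ, 1 ≤ l → γ l < l) ∧
  ((∃ k : ℕ, 1 ≤ k ∧ γ k = (k : ℝ)) → ∀ l : ℕ, 2 ≤ l → (l : ℝ) - 1 < γ l)

/-- The rounding rule `R_γ` of a signpost sequence, as a set-valued map:
`R_γ(0) = {0}`, `R_γ(t) = {n}` for `t ∈ (γ n, γ (n+1))`, and
`R_γ(t) = {n-1, n}` when `t = γ n > 0`. -/
def roundSet (γ : ℕ → ℝ) (t : ℝ) : Set ℕ :=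
  {k | (t = 0 ∧ k = 0) ∨ (γ k < t ∧ t < γ (k + 1)) ∨ (0 < t ∧ (t = γ k ∨ t = γ (k + 1)))}

/-- The divisor method solution set `A_γ(Q, h)`. -/
def divisorSet (γ : ℕ → ℝ) {n : ℕ} (Q : Fin n → ℝ) (h : ℕ) : Set (Fin n → ℕ) :=
  {S | (∑ i, S i) = h ∧ ∃ lam : ℝ, 0 < lam ∧ ∀ i, S i ∈ roundSet γ (Q i / lam)}

/-- The two candidate types. -/
inductive MType
  | f | m
deriving DecidableEq

instance : Fintype MType :=
  ⟨{MType.f, MType.m}, fun x => by cases x <;> simp⟩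

/-- The other type. -/
def MType.other : MType → MType
  | .f => .m
  | .m => .f

/-- An instance of the apportionment problem with type parity: a finite candidate
set `C`, a party map, a (nonnegative real) vote map, a type map, a house size
`h ≥ 1` and a total order (the field `ord`) refining the votes. -/
structure TypedInstance (n : ℕ) (C : Type) [Fintype C] [DecidableEq C] where
  ord : LinearOrder C
  party : C → Fin n
  votes : C → ℝ
  votes_nonneg : ∀ c, 0 ≤ votes c
  mtype : C → MType
  h : ℕ
  h_pos : 1 ≤ h
  refines : ∀ c c' : C, votes c' < votes c → ord.lt c' c

namespace TypedInstance

variable {n : ℕ} {C : Type} [Fintype C] [DecidableEq C]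

/-- The candidates of party `i`. -/
def Ci (I : TypedInstance n C) (i : Fin n) : Finset C :=
  univ.filter fun c => I.party c = i

/-- The candidates of type `t`. -/
def Ct (I : TypedInstance n C) (t : MType) : Finset C :=
  univ.filter fun c => I.mtype c = t

/-- The candidates of party `i` and type `t`. -/
def Cit (I : TypedInstance n C) (i : Fin n) (t : MType) : Finset C :=
  univ.filter fun c => I.party c = i ∧ I.mtype c = t

/-- The party vote totals `Q(I)`. -/
def Q (I : TypedInstance n C) : Fin n → ℝ := fun i => ∑ c ∈ I.Ci i, I.votes c

/-- The party × type vote totals `P(I)`. -/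
def P (I : TypedInstance n C) : Fin n → MType → ℝ := fun i t => ∑ c ∈ I.Cit i t, I.votes c

/-- The supply matrix `S(I)`. -/
def S (I : TypedInstance n C) : Fin n → MType → ℕ := fun i t => (I.Cit i t).card

/-- The supply condition: `|C_i^t| ≥ ⌈h/2⌉` for every party `i` and type `t`. -/
def SupplyCond (I : TypedInstance n C) : Prop :=
  ∀ (i : Fin n) (t : MType), (I.h + 1) / 2 ≤ (I.Cit i t).card

/-- Type parity condition (A): the numbers of elected candidates of the two types
differ by exactly `h mod 2`. Allocations are represented by the finset of elected
candidates. -/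
def CondA (I : TypedInstance n C) (E : Finset C) : Prop :=
  (((E.filter fun c => I.mtype c = MType.f).card : ℤ) -
    ((E.filter fun c => I.mtype c = MType.m).card : ℤ)).natAbs = I.h % 2

instance (I : TypedInstance n C) (E : Finset C) : Decidable (I.CondA E) := by
  unfold CondA; infer_instance

/-- The number of elected candidates of each party. -/
def partyCount (I : TypedInstance n C) (E : Finset C) : Fin n → ℕ :=
  fun i => (E.filter fun c => I.party c = i).card

/-- The number of elected candidates of each type. -/
def typeCount (I : TypedInstance n C) (E : Finset C) : MType → ℕ :=
  fun t => (E.filter fun c => I.mtype c = t).card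

/-- Party proportionality condition (B) w.r.t. a signpost sequence `γ`. -/
def CondB (I : TypedInstance n C) (γ : ℕ → ℝ) (E : Finset C) : Prop :=
  ∃ J ∈ divisorSet γ I.Q I.h, ∀ i, I.partyCount E i = J i

/-- The set `X(I, γ)` of feasible allocations. -/
def X (I : TypedInstance n C) (γ : ℕ → ℝ) : Set (Finset C) :=
  {E | I.CondA E ∧ I.CondB γ E}

/-- The polytope `Z(I, J, γ)` of fractional allocations. -/
def Z (I : TypedInstance n C) (J : Fin n → ℕ) : Set (Fin n → MType → ℝ) :=
  {y | (∀ t : MType, ((I.h / 2 : ℕ) : ℝ) ≤ ∑ i, y i t) ∧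
       (∀ i : Fin n, y i MType.f + y i MType.m = (J i : ℝ)) ∧
       (∀ (i : Fin n) (t : MType), 0 ≤ y i t ∧ y i t ≤ ((I.Cit i t).card : ℝ))}

/-- The scaled instance `αI` (same candidate order). -/
def scale (I : TypedInstance n C) (α : ℝ) (hα : 0 < α) : TypedInstance n C where
  ord := I.ord
  party := I.party
  votes := fun c => α * I.votes c
  votes_nonneg := fun c => mul_nonneg hα.le (I.votes_nonneg c)
  mtype := I.mtype
  h := I.h
  h_pos := I.h_pos
  refines := fun c c' hlt => I.refines c c' (lt_of_mul_lt_mul_left hlt hα.le)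

/-- `G` is a voting increment of `I` in candidate `c`: identical to `I` except
that `c` garners strictly more votes. -/
def VotingIncrement (I G : TypedInstance n C) (c : C) : Prop :=
  G.party = I.party ∧ G.mtype = I.mtype ∧ G.h = I.h ∧
  I.votes c < G.votes c ∧ ∀ c' : C, c' ≠ c → G.votes c' = I.votes c'

/-- The rank of a candidate in the order `≻`: position `1` is the top candidate. -/
def rank (I : TypedInstance n C) (c : C) : ℕ :=
  letI := I.ord
  (univ.filter fun c' => c ≤ c').card

/-- The top `k` candidates of a subset `D` according to the order of `I`. -/
def topOf (I : TypedInstance n C) (D : Finset C) (k : ℕ) : Finset C :=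
  letI := I.ord
  D.filter fun c => (D.filter fun c' => c ≤ c').card ≤ k

/-- The type-oblivious solution `T_J`: in every party `i`, the top `J i`
candidates of `C_i` are elected. -/
def oblivious (I : TypedInstance n C) (J : Fin n → ℕ) : Finset C :=
  univ.filter fun c => c ∈ I.topOf (I.Ci (I.party c)) (J (I.party c))

/-- The over-represented type of an allocation (type `f` in case of a tie). -/
def overType (I : TypedInstance n C) (E : Finset C) : MType :=
  if I.typeCount E MType.m ≤ I.typeCount E MType.f then MType.f else MType.m

/-- One parity-correction swap: the worst-ranked elected candidate of the
over-represented type is replaced by the best-ranked unelected candidate of the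
same party and of the under-represented type (if any; otherwise nothing happens). -/
def swapStep (I : TypedInstance n C) (E : Finset C) : Finset C :=
  letI := I.ord
  let t := I.overType E
  let elected := E.filter fun c => I.mtype c = t
  if hE : elected.Nonempty then
    let s := elected.min' hE
    let pool := univ.filter fun c => c ∉ E ∧ I.party c = I.party s ∧ I.mtype c = t.other
    if hp : pool.Nonempty then insert (pool.max' hp) (E.erase s) else E
  else E

/-- The parity-correction loop (with fuel). -/
def greedyAux (I : TypedInstance n C) : ℕ → Finset C → Finset C
  | 0, E => E
  | k + 1, E => if I.CondA E then E else greedyAux I k (I.swapStep E)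

/-- The output `E_J` of the greedy & parity correction algorithm. -/
def greedy (I : TypedInstance n C) (J : Fin n → ℕ) : Finset C :=
  greedyAux I I.h (I.oblivious J)

/-- The greedy & parity correction mechanism `M^G`. -/
def MG (I : TypedInstance n C) (γ : ℕ → ℝ) : Set (Finset C) :=
  {E | ∃ J ∈ divisorSet γ I.Q I.h, E = I.greedy J}

/-- Two allocations agree on all candidates of rank at most `l`. -/
def agreeUpTo (I : TypedInstance n C) (E₁ E₂ : Finset C) (l : ℕ) : Prop :=
  ∀ c : C, I.rank c ≤ l → (c ∈ E₁ ↔ c ∈ E₂)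

instance (I : TypedInstance n C) (E₁ E₂ : Finset C) (l : ℕ) :
    Decidable (I.agreeUpTo E₁ E₂ l) := by
  unfold agreeUpTo; infer_instance

/-- The length of the common prefix of two allocations (w.r.t. the ranking). -/
def prefixLen (I : TypedInstance n C) (E₁ E₂ : Finset C) : ℕ :=
  ((Finset.range (Fintype.card C + 1)).filter fun l => I.agreeUpTo E₁ E₂ l).sup id

/-- The vote-leading type (type `f` in case of a tie; this tie-breaking rule is
scaling invariant). -/
noncomputable def voteLeading (I : TypedInstance n C) : MType :=
  if (∑ c ∈ I.Ct MType.f, I.votes c) < (∑ c ∈ I.Ct MType.m, I.votes c) then MType.m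
  else MType.f

/-- The parity marginal `φ(I)`: for even `h` both types get `h/2`; for odd `h` the
vote-leading type gets `⌈h/2⌉`. -/
noncomputable def parityMarginal (I : TypedInstance n C) : MType → ℕ :=
  fun t => if t = I.voteLeading then (I.h + 1) / 2 else I.h / 2

end TypedInstance

/-- `(x, lam, mu)` is a `δ`-biproportional solution of the two-dimensional
instance with supply `(P, S, J, φ)`. -/
def IsBipropSol (δ : ℕ → ℝ) {n : ℕ} (P : Fin n → MType → ℝ) (S : Fin n → MType → ℕ)
    (J : Fin n → ℕ) (φ : MType → ℕ) (x : Fin n → MType → ℕ)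
    (lam : Fin n → ℝ) (mu : MType → ℝ) : Prop :=
  (∀ i, 0 < lam i) ∧ (∀ t, 0 < mu t) ∧
  (∀ (i : Fin n) (t : MType), x i t < S i t → x i t ∈ roundSet δ (P i t * lam i * mu t)) ∧
  (∀ i : Fin n, x i MType.f + x i MType.m = J i) ∧
  (∀ t : MType, (∑ i, x i t) = φ t) ∧
  (∀ (i : Fin n) (t : MType), x i t ≤ S i t)

/-- The set `B_δ(P, S, J, φ)` of `δ`-biproportional solutions. -/
def bipropSet (δ : ℕ → ℝ) {n : ℕ} (P : Fin n → MType → ℝ) (S : Fin n → MType → ℕ)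
    (J : Fin n → ℕ) (φ : MType → ℕ) : Set (Fin n → MType → ℕ) :=
  {x | ∃ lam mu, IsBipropSol δ P S J φ x lam mu}

/-- `δ`-biproportional solutions of a two-dimensional instance `(P, J, φ)`
without supply bounds. -/
def IsBipropSolNS (δ : ℕ → ℝ) {n : ℕ} (P : Fin n → MType → ℝ)
    (J : Fin n → ℕ) (φ : MType → ℕ) (x : Fin n → MType → ℕ)
    (lam : Fin n → ℝ) (mu : MType → ℝ) : Prop :=
  (∀ i, 0 < lam i) ∧ (∀ t, 0 < mu t) ∧
  (∀ (i : Fin n) (t : MType), x i t ∈ roundSet δ (P i t * lam i * mu t)) ∧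
  (∀ i : Fin n, x i MType.f + x i MType.m = J i) ∧
  (∀ t : MType, (∑ i, x i t) = φ t)

/-- The set `B_δ(P, J, φ)` for instances without supply bounds. -/
def bipropSetNS (δ : ℕ → ℝ) {n : ℕ} (P : Fin n → MType → ℝ)
    (J : Fin n → ℕ) (φ : MType → ℕ) : Set (Fin n → MType → ℕ) :=
  {x | ∃ lam mu, IsBipropSolNS δ P J φ x lam mu}

/-- `F` is a fair share (matrix scaling) of the two-dimensional instance
`(P, J, φ)`. -/
def IsFairShare {n : ℕ} (P : Fin n → MType → ℝ) (J : Fin n → ℕ) (φ : MType → ℕ)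
    (F : Fin n → MType → ℝ) : Prop :=
  ∃ (lam : Fin n → ℝ) (mu : MType → ℝ),
    (∀ i, 0 < lam i) ∧ (∀ t, 0 < mu t) ∧ (∀ i t, 0 < F i t) ∧
    (∀ (i : Fin n) (t : MType), F i t = P i t * lam i * mu t) ∧
    (∀ i : Fin n, F i MType.f + F i MType.m = (J i : ℝ)) ∧
    (∀ t : MType, (∑ i, F i t) = (φ t : ℝ))

namespace TypedInstance

variable {n : ℕ} {C : Type} [Fintype C] [DecidableEq C]

/-- The allocation `E_x` electing, for every party `i` and type `t`, the top
`x i t` candidates of `C_i^t`. -/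
def allocOf (I : TypedInstance n C) (x : Fin n → MType → ℕ) : Finset C :=
  univ.filter fun c =>
    c ∈ I.topOf (I.Cit (I.party c) (I.mtype c)) (x (I.party c) (I.mtype c))

/-- The `δ`-biproportional parity mechanism `M^B_δ`. -/
def MB (I : TypedInstance n C) (δ γ : ℕ → ℝ) : Set (Finset C) :=
  {E | ∃ J ∈ divisorSet γ I.Q I.h,
        ∃ x ∈ bipropSet δ I.P I.S J I.parityMarginal, E = I.allocOf x}

end TypedInstance
lemma sp_lb {δ : ℕ → ℝ} (hδ : Signpost δ) : ∀ n : ℕ, (n:ℝ) - 1 ≤ δ n ∧ δ n ≤ n := by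
  intro n
  cases n with
  | zero => simp [hδ.1]
  | succ m => exact hδ.2.1 (m+1) (by omega)

lemma sp_strict {δ : ℕ → ℝ} (hδ : Signpost δ) (n : ℕ) (hn : 1 ≤ n) : δ n < δ (n+1) := by
  rcases lt_or_eq_of_le (sp_lb hδ n).2 with h | h
  · have h2 : (n:ℝ) ≤ δ (n+1) := by
      have := (sp_lb hδ (n+1)).1; push_cast at this; linarith
    linarith
  · have := hδ.2.2.2 ⟨n, hn, h⟩ (n+1) (by omega)
    push_cast at this
    linarith

lemma sp_mono {δ : ℕ → ℝ} (hδ : Signpost δ) : Monotone δ := by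
  apply monotone_nat_of_le_succ
  intro n
  cases n with
  | zero =>
    have := (sp_lb hδ 1).1
    simp [hδ.1]; push_cast at this; linarith
  | succ m => exact (sp_strict hδ (m+1) (by omega)).le

lemma sp_round {δ : ℕ → ℝ} (hδ : Signpost δ) {t : ℝ} (ht : 0 < t) {k : ℕ}
    (hk : k ∈ roundSet δ t) : δ k ≤ t ∧ t ≤ δ (k+1) := by
  have hmono := sp_mono hδ
  rcases hk with ⟨h0, _⟩ | ⟨h1, h2⟩ | ⟨_, h | h⟩
  · linarith
  · exact ⟨h1.le, h2.le⟩
  · exact ⟨h.ge, h.trans_le (hmono (Nat.le_succ k))⟩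
  · exact ⟨le_of_le_of_eq (hmono (Nat.le_succ k) : δ k ≤ δ (k+1)) h.symm, h.le⟩

set_option maxHeartbeats 4000000 in
/-- for every `ℓ ≥ 1` and signpost sequence `δ` there is a
two-dimensional instance whose unique `δ`-biproportional solution deviates from
the fair share by at least `ℓ` in each entry of the first row; in particular the
`ℓ₁` distance is at least `2ℓ`. -/
theorem stmt17 (l : ℕ) (hl : 1 ≤ l) (δ : ℕ → ℝ) (hδ : Signpost δ) :
    ∃ (n : ℕ) (P : Fin (n + 1) → MType → ℝ) (J : Fin (n + 1) → ℕ) (φ : MType → ℕ)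
      (F : Fin (n + 1) → MType → ℝ) (y : Fin (n + 1) → MType → ℕ),
      (∀ i t, 0 < P i t) ∧ ((∑ i, J i) = φ MType.f + φ MType.m) ∧
      IsFairShare P J φ F ∧
      bipropSetNS δ P J φ = {y} ∧
      F 0 MType.f + l ≤ (y 0 MType.f : ℝ) ∧
      (y 0 MType.m : ℝ) ≤ F 0 MType.m - l ∧
      (2 * l : ℝ) ≤ ∑ i, (|(y i MType.f : ℝ) - F i MType.f| +
        |(y i MType.m : ℝ) - F i MType.m|) := by
  classical
  -- basic signpost facts
  have c1l : (0:ℝ) ≤ δ 1 := by have := (sp_lb hδ 1).1; push_cast at this; linarith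
  have c1u : δ 1 ≤ 1 := by have := (sp_lb hδ 1).2; push_cast at this; linarith
  have c2l : (1:ℝ) ≤ δ 2 := by have := (sp_lb hδ 2).1; push_cast at this; linarith
  have c2u : δ 2 ≤ 2 := by have := (sp_lb hδ 2).2; push_cast at this; linarith
  have c3l : (2:ℝ) ≤ δ 3 := by have := (sp_lb hδ 3).1; push_cast at this; linarith
  have h12 : δ 1 < δ 2 := sp_strict hδ 1 le_rfl
  have h23 : δ 2 < δ 3 := sp_strict hδ 2 (by norm_num)
  have hδ2pos : (0:ℝ) < δ 2 := by linarith
  have hd31 : 2 * δ 1 < δ 3 := by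
    rcases lt_or_eq_of_le c1u with h | h
    · linarith
    · have := hδ.2.2.2 ⟨1, le_rfl, by push_cast; linarith⟩ 3 (by norm_num)
      push_cast at this; linarith
  -- parameters
  set m : ℝ := min (δ 3 - 2 * δ 1) 1 with hm_def
  have hm : 0 < m := lt_min (by linarith) one_pos
  have hm1 : m ≤ 1 := min_le_right _ _
  have hmd : m ≤ δ 3 - 2 * δ 1 := min_le_left _ _
  set e : ℝ := m / 100 with he_def
  have he : 0 < e := by positivity
  have he1 : e ≤ 1 / 100 := by rw [he_def]; linarith
  have hlR : (1:ℝ) ≤ (l:ℝ) := by exact_mod_cast hl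
  obtain ⟨k, hkl, hK2⟩ : ∃ k : ℕ, (l:ℝ) ≤ (k:ℝ) * e ∧ (k:ℝ) * e < 2 * l := by
    refine ⟨l * ⌈(1:ℝ) / e⌉₊, ?_, ?_⟩
    · have hceil : (1:ℝ) / e ≤ (⌈(1:ℝ)/e⌉₊ : ℝ) := Nat.le_ceil _
      have h1 : (l:ℝ) * ((1:ℝ)/e) * e ≤ (l:ℝ) * (⌈(1:ℝ)/e⌉₊ : ℝ) * e := by
        have h0 := mul_le_mul_of_nonneg_left hceil (by positivity : (0:ℝ) ≤ (l:ℝ))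
        exact mul_le_mul_of_nonneg_right h0 he.le
      have h2 : (l:ℝ) * ((1:ℝ)/e) * e = l := by field_simp
      push_cast
      nlinarith
    · have hceil2 : (⌈(1:ℝ)/e⌉₊ : ℝ) < (1:ℝ)/e + 1 := Nat.ceil_lt_add_one (by positivity)
      have h4 : (l:ℝ) * ((⌈(1:ℝ)/e⌉₊ : ℝ) * e) < (l:ℝ) * (((1:ℝ)/e + 1) * e) :=
        mul_lt_mul_of_pos_left (mul_lt_mul_of_pos_right hceil2 he) (by linarith)
      have h5 : ((1:ℝ)/e + 1) * e = 1 + e := by field_simp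
      rw [h5] at h4
      have h6 : (l:ℝ) * e ≤ (l:ℝ) * (1/100) := mul_le_mul_of_nonneg_left he1 (by linarith)
      push_cast
      nlinarith [h4, h6]
  set K : ℝ := (k:ℝ) * e with hK_def
  have hK1 : (1:ℝ) ≤ K := le_trans hlR hkl
  obtain ⟨N, hNl, hNm⟩ : ∃ N : ℕ, 2 * l + 1 ≤ N ∧ (1000:ℝ) * l ≤ (N:ℝ) * m := by
    refine ⟨⌈(1000:ℝ) * l / m⌉₊ + 2 * l + 1, by omega, ?_⟩
    have h1 := Nat.le_ceil ((1000:ℝ) * l / m)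
    rw [div_le_iff₀ hm] at h1
    have h2 : (⌈(1000:ℝ) * l / m⌉₊ : ℝ) ≤ ((⌈(1000:ℝ) * l / m⌉₊ + 2 * l + 1 : ℕ) : ℝ) := by
      have h3 : ⌈(1000:ℝ) * l / m⌉₊ ≤ ⌈(1000:ℝ) * l / m⌉₊ + 2 * l + 1 := by omega
      exact_mod_cast h3
    nlinarith [mul_le_mul_of_nonneg_right h2 hm.le]
  have hN1 : 1 ≤ N := by omega
  have hNR1 : (1:ℝ) ≤ (N:ℝ) := by exact_mod_cast hN1
  have hNK : K < (N:ℝ) := by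
    have h6 : ((2*l+1 : ℕ):ℝ) ≤ (N:ℝ) := by exact_mod_cast hNl
    push_cast at h6; linarith
  have hNKpos : 0 < (N:ℝ) - K := by linarith
  have hNKpos2 : 0 < (N:ℝ) + K := by linarith
  have h1e : (0:ℝ) < 1 - e := by linarith
  have hNcast : (0:ℝ) ≤ (N:ℝ) := Nat.cast_nonneg N
  -- the key inequality
  have hNm0 : (0:ℝ) ≤ (N:ℝ) * m := by positivity
  have hNme : (N:ℝ) * m * e ≤ (N:ℝ) * m * (1/100) := by
    have : e ≤ 1/100 := he1
    nlinarith
  have hKm : K * m ≤ K := by nlinarith [mul_nonneg (by linarith : (0:ℝ) ≤ K) (by linarith : (0:ℝ) ≤ 1 - m)]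
  have hKme : (0:ℝ) ≤ K * m * e := by positivity
  have h3Ne : 3 * (N:ℝ) * e = 3/100 * ((N:ℝ) * m) := by rw [he_def]; ring
  have hC : 3 * (N:ℝ) * e + 4 * K < m * (((N:ℝ) - K) * (1 - e)) := by
    have hexp : m * (((N:ℝ) - K) * (1 - e))
        = (N:ℝ)*m - (N:ℝ)*m*e - K*m + K*m*e := by ring
    rw [hexp, h3Ne]
    linarith [hNm, hK2, hkl, hNme, hKm, hKme, hlR]
  have condii : δ 1 * (((N:ℝ) + K) * (2 + e)) < δ 3 * (((N:ℝ) - K) * (1 - e)) := by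
    have hKe : K * e ≤ K := by nlinarith [mul_nonneg (by linarith : (0:ℝ) ≤ K) (by linarith : (0:ℝ) ≤ 1 - e)]
    have hNe0 : (0:ℝ) ≤ (N:ℝ) * e := by positivity
    have hA : δ 1 * (((N:ℝ) + K) * (2 + e)) - δ 1 * (2 * (((N:ℝ) - K) * (1 - e)))
        ≤ 3 * (N:ℝ) * e + 4 * K := by
      have hinner : δ 1 * (3 * (N:ℝ) * e + 4 * K - K * e)
          ≤ 1 * (3 * (N:ℝ) * e + 4 * K - K * e) :=
        mul_le_mul_of_nonneg_right c1u (by linarith)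
      nlinarith
    have hB : (2 * δ 1 + m) * (((N:ℝ) - K) * (1 - e)) ≤ δ 3 * (((N:ℝ) - K) * (1 - e)) :=
      mul_le_mul_of_nonneg_right (by linarith) (by positivity)
    nlinarith [hA, hB, hC]
  -- the ratio r and auxiliary entries
  set r : ℝ := (((N:ℝ) + K) * (2 + e)) / (((N:ℝ) - K) * (1 - e)) with hr_def
  have hden : 0 < ((N:ℝ) - K) * (1 - e) := by positivity
  have hr2 : 2 < r := by
    rw [hr_def, lt_div_iff₀ hden]
    nlinarith [mul_nonneg hNcast he.le, mul_nonneg (by linarith : (0:ℝ) ≤ K) he.le]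
  have hr0 : 0 < r := by linarith
  have hr1 : 1 < r := by linarith
  have hd1r : δ 1 * r < δ 3 := by
    rw [hr_def, ← mul_div_assoc, div_lt_iff₀ hden]
    linarith [condii]
  set v : ℝ := (max (δ 1) (δ 2 / r) + min (δ 2) (δ 3 / r)) / 2 with hv_def
  have hmaxmin : max (δ 1) (δ 2 / r) < min (δ 2) (δ 3 / r) := by
    apply max_lt <;> apply lt_min
    · exact h12
    · rw [lt_div_iff₀ hr0]; linarith [hd1r]
    · exact div_lt_self hδ2pos hr1
    · gcongr
  have hv1 : δ 1 < v := by
    have := le_max_left (δ 1) (δ 2 / r)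
    rw [hv_def]; linarith [hmaxmin]
  have hv2 : v < δ 2 := by
    have := min_le_left (δ 2) (δ 3 / r)
    rw [hv_def]; linarith [hmaxmin]
  have huv1 : δ 2 < r * v := by
    have h7 : δ 2 / r ≤ max (δ 1) (δ 2 / r) := le_max_right _ _
    have h8 : δ 2 / r < v := by rw [hv_def]; linarith [hmaxmin]
    rw [div_lt_iff₀ hr0] at h8; linarith
  have huv2 : r * v < δ 3 := by
    have h7 : min (δ 2) (δ 3 / r) ≤ δ 3 / r := min_le_right _ _
    have h8 : v < δ 3 / r := by rw [hv_def]; linarith [hmaxmin]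
    rw [lt_div_iff₀ hr0] at h8; linarith
  have hv0 : 0 < v := by
    have h8 : δ 2 / r < v := by
      have := le_max_right (δ 1) (δ 2 / r); rw [hv_def]; linarith [hmaxmin]
    have h9 : 0 < δ 2 / r := by positivity
    linarith
  have hrv0 : 0 < r * v := by positivity
  -- the big-row entry
  set mN : ℝ := (δ N + δ (N+1)) / 2 with hmN_def
  have hstrN : δ N < δ (N + 1) := sp_strict hδ N hN1
  have hmN1 : δ N < mN := by rw [hmN_def]; linarith
  have hmN2 : mN < δ (N+1) := by rw [hmN_def]; linarith
  have hlbN : ((N:ℝ)) - 1 ≤ δ N := (sp_lb hδ N).1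
  have hubN : δ N ≤ (N:ℝ) := (sp_lb hδ N).2
  have hmN0 : 0 < mN := by rw [hmN_def]; linarith
  have hmNne : mN ≠ 0 := ne_of_gt hmN0
  have hvne : v ≠ 0 := ne_of_gt hv0
  have hNKne : ((N:ℝ) - K) ≠ 0 := ne_of_gt hNKpos
  have hNKne2 : ((N:ℝ) + K) ≠ 0 := ne_of_gt hNKpos2
  have h1ene : (1:ℝ) - e ≠ 0 := ne_of_gt h1e
  -- the instance
  refine ⟨k, (fun i t => if i = 0 then mN else (if t = MType.f then r * v else v)),
    (fun i => if i = 0 then 2 * N else 3),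
    (fun t => if t = MType.f then N + 2 * k else N + k),
    (fun i t => if i = 0 then (if t = MType.f then (N:ℝ) - K else (N:ℝ) + K)
      else (if t = MType.f then 2 + e else 1 - e)),
    (fun i t => if i = 0 then N else (if t = MType.f then 2 else 1)),
    ?_, ?_, ?_, ?_, ?_, ?_, ?_⟩
  · -- positivity of P
    intro i t
    by_cases hi : i = 0 <;> rcases t <;> simp [hi]
    all_goals first
      | exact hmN0
      | exact hrv0
      | exact hv0
  · -- marginal consistency
    rw [Fin.sum_univ_succ]
    simp [Fin.succ_ne_zero, Finset.sum_const]
    omega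
  · -- fair share
    refine ⟨(fun i => if i = 0 then ((N:ℝ) + K) / mN else (1 - e) / v),
      (fun t => if t = MType.f then ((N:ℝ) - K) / ((N:ℝ) + K) else 1), ?_, ?_, ?_, ?_, ?_, ?_⟩
    · intro i
      by_cases hi : i = 0 <;> simp [hi]
      · exact div_pos hNKpos2 hmN0
      · exact div_pos h1e hv0
    · intro t
      rcases t <;> simp
      exact div_pos hNKpos hNKpos2
    · intro i t
      by_cases hi : i = 0 <;> rcases t <;> simp [hi] <;> linarith
    · intro i t
      by_cases hi : i = 0 <;> rcases t <;> simp [hi]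
      · field_simp
      · field_simp
      · rw [hr_def]; field_simp
      · field_simp
    · intro i
      by_cases hi : i = 0 <;> simp [hi] <;> push_cast <;> ring
    · intro t
      rcases t <;> simp [Fin.sum_univ_succ, Fin.succ_ne_zero, Finset.sum_const, hK_def] <;>
        push_cast <;> ring
  · -- unique biproportional solution
    have hPin : ∀ (i : Fin (k+1)) (t : MType),
        δ ((if i = 0 then N else (if t = MType.f then 2 else 1)))
          < (if i = 0 then mN else (if t = MType.f then r * v else v)) ∧
        (if i = 0 then mN else (if t = MType.f then r * v else v))
          < δ ((if i = 0 then N else (if t = MType.f then 2 else 1)) + 1) := by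
      intro i t
      by_cases hi : i = 0 <;> rcases t <;> simp [hi]
      · exact ⟨hmN1, hmN2⟩
      · exact ⟨hmN1, hmN2⟩
      · exact ⟨huv1, huv2⟩
      · exact ⟨hv1, hv2⟩
    have hPpos : ∀ (i : Fin (k+1)) (t : MType),
        (0:ℝ) < (if i = 0 then mN else (if t = MType.f then r * v else v)) := by
      intro i t
      by_cases hi : i = 0 <;> rcases t <;> simp [hi]
      all_goals first
        | exact hmN0
        | exact hrv0
        | exact hv0
    apply Set.eq_singleton_iff_unique_mem.mpr
    constructor
    · -- membership
      refine ⟨fun _ => 1, fun _ => 1, fun i => one_pos, fun t => one_pos, ?_, ?_, ?_⟩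
      · intro i t
        have h := hPin i t
        show _ ∨ _ ∨ _
        rw [mul_one, mul_one]
        exact Or.inr (Or.inl h)
      · intro i
        by_cases hi : i = 0 <;> simp [hi] <;> omega
      · intro t
        rcases t <;>
          simp [Fin.sum_univ_succ, Fin.succ_ne_zero, Finset.sum_const] <;> omega
    · -- uniqueness
      rintro x ⟨lam, mu, hlam, hmu, hmem, hrow, hcol⟩
      have hmono := sp_mono hδ
      have hTpos : ∀ (i : Fin (k+1)) (t : MType),
          (0:ℝ) < (if i = 0 then mN else (if t = MType.f then r * v else v)) * lam i * mu t :=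
        fun i t => mul_pos (mul_pos (hPpos i t) (hlam i)) (hmu t)
      have hbd := fun (i : Fin (k+1)) (t : MType) => sp_round hδ (hTpos i t) (hmem i t)
      have hyJ : ∀ i : Fin (k+1),
          (if i = 0 then N else (if MType.f = MType.f then 2 else 1))
          + (if i = 0 then N else (if MType.m = MType.f then 2 else 1))
          = (if i = 0 then 2 * N else 3) := by
        intro i; by_cases hi : i = 0 <;> simp [hi] <;> omega
      have hycolf : (∑ i : Fin (k+1), (if i = 0 then N else (if MType.f = MType.f then 2 else 1)))
          = N + 2 * k := by
        simp [Fin.sum_univ_succ, Fin.succ_ne_zero, Finset.sum_const]; omega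
      have hkey : ∀ i : Fin (k+1), x i MType.f
          = (if i = 0 then N else (if MType.f = MType.f then 2 else 1)) := by
        by_contra hcon
        push_neg at hcon
        obtain ⟨i0, hi0⟩ := hcon
        have hsums : (∑ i, x i MType.f)
            = ∑ i : Fin (k+1), (if i = 0 then N else (if MType.f = MType.f then 2 else 1)) := by
          rw [hcol MType.f, hycolf]; simp
        have hex1 : ∃ i : Fin (k+1),
            (if i = 0 then N else (if MType.f = MType.f then 2 else 1)) < x i MType.f := by
          by_contra hc; push_neg at hc
          rcases lt_or_eq_of_le (hc i0) with h | h
          · exact absurd hsums (ne_of_lt (Finset.sum_lt_sum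
              (fun i _ => hc i) ⟨i0, Finset.mem_univ _, h⟩))
          · exact hi0 h
        have hex2 : ∃ j : Fin (k+1),
            x j MType.f < (if j = 0 then N else (if MType.f = MType.f then 2 else 1)) := by
          by_contra hc; push_neg at hc
          rcases lt_or_eq_of_le (hc i0) with h | h
          · exact absurd hsums (ne_of_gt (Finset.sum_lt_sum
              (fun i _ => hc i) ⟨i0, Finset.mem_univ _, h⟩))
          · exact hi0 h.symm
        obtain ⟨i, hi⟩ := hex1
        obtain ⟨j, hj⟩ := hex2
        have hJi := (hrow i).trans (hyJ i).symm
        have hJj := (hrow j).trans (hyJ j).symm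
        have hxm_i : x i MType.m + 1 ≤ (if i = 0 then N else (if MType.m = MType.f then 2 else 1)) := by
          omega
        have hxm_j : (if j = 0 then N else (if MType.m = MType.f then 2 else 1)) + 1 ≤ x j MType.m := by
          omega
        have A1 : (if i = 0 then mN else (if MType.f = MType.f then r * v else v))
            < (if i = 0 then mN else (if MType.f = MType.f then r * v else v)) * lam i * mu MType.f :=
          lt_of_lt_of_le (lt_of_lt_of_le (hPin i MType.f).2 (hmono (Nat.succ_le_of_lt hi)))
            (hbd i MType.f).1
        have A2 : (if j = 0 then mN else (if MType.m = MType.f then r * v else v))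
            < (if j = 0 then mN else (if MType.m = MType.f then r * v else v)) * lam j * mu MType.m :=
          lt_of_lt_of_le (lt_of_lt_of_le (hPin j MType.m).2 (hmono hxm_j))
            (hbd j MType.m).1
        have A3 : (if i = 0 then mN else (if MType.m = MType.f then r * v else v)) * lam i * mu MType.m
            < (if i = 0 then mN else (if MType.m = MType.f then r * v else v)) :=
          lt_of_le_of_lt (le_trans (hbd i MType.m).2 (hmono hxm_i))
            (hPin i MType.m).1
        have A4 : (if j = 0 then mN else (if MType.f = MType.f then r * v else v)) * lam j * mu MType.f
            < (if j = 0 then mN else (if MType.f = MType.f then r * v else v)) :=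
          lt_of_le_of_lt (le_trans (hbd j MType.f).2 (hmono (Nat.succ_le_of_lt hj)))
            (hPin j MType.f).1
        set Pif := (if i = 0 then mN else (if MType.f = MType.f then r * v else v)) with hPif
        set Pim := (if i = 0 then mN else (if MType.m = MType.f then r * v else v)) with hPim
        set Pjf := (if j = 0 then mN else (if MType.f = MType.f then r * v else v)) with hPjf
        set Pjm := (if j = 0 then mN else (if MType.m = MType.f then r * v else v)) with hPjm
        have e1 : Pif * Pjm < (Pif * lam i * mu MType.f) * (Pjm * lam j * mu MType.m) :=
          mul_lt_mul'' A1 A2 (hPpos i MType.f).le (hPpos j MType.m).le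
        have e2 : (Pim * lam i * mu MType.m) * (Pjf * lam j * mu MType.f) < Pim * Pjf :=
          mul_lt_mul'' A3 A4 (hTpos i MType.m).le (hTpos j MType.f).le
        have e3 : ((Pif * lam i * mu MType.f) * (Pjm * lam j * mu MType.m)) * (Pim * Pjf)
            = ((Pim * lam i * mu MType.m) * (Pjf * lam j * mu MType.f)) * (Pif * Pjm) := by
          ring
        have p1 : 0 < Pim * Pjf := mul_pos (hPpos i MType.m) (hPpos j MType.f)
        have p2 : 0 < Pif * Pjm := mul_pos (hPpos i MType.f) (hPpos j MType.m)
        have q1 := mul_lt_mul_of_pos_right e1 p1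
        have q2 := mul_lt_mul_of_pos_right e2 p2
        linarith [q1, q2, e3]
      funext i t
      rcases t
      · exact hkey i
      · have h1 := (hrow i).trans (hyJ i).symm
        have h2 := hkey i
        omega
  · -- F 0 f + l ≤ y 0 f
    simp
    linarith [hkl]
  · -- y 0 m ≤ F 0 m - l
    simp
    linarith [hkl]
  · -- the l1 bound
    refine le_trans ?_ (Finset.single_le_sum (f := fun i : Fin (k+1) =>
        (|((if i = 0 then N else (if MType.f = MType.f then 2 else 1) : ℕ) : ℝ)
          - (if i = 0 then (if MType.f = MType.f then (N:ℝ) - K else (N:ℝ) + K)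
            else (if MType.f = MType.f then 2 + e else 1 - e))|
        + |((if i = 0 then N else (if MType.m = MType.f then 2 else 1) : ℕ) : ℝ)
          - (if i = 0 then (if MType.m = MType.f then (N:ℝ) - K else (N:ℝ) + K)
            else (if MType.m = MType.f then 2 + e else 1 - e))|))
      (fun i _ => by positivity) (Finset.mem_univ (0 : Fin (k+1))))
    simp
    have habs : |K| = K := abs_of_nonneg (by linarith)
    rw [habs]
    linarith [hkl]
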